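/- Let α < 1, α ≠ 0, a > 0. For x > 0, Γ(1−α) x^{−α} e^{ax} Γ(α, ax) = ∫₀^∞ ζ^{−α} e^{−aζ}/(ζ+x) dζ > 0; consequently, if additionally α < 0, b > 0, and c < a^α Γ(−α), the equation Γ(1−α) x^{−α} e^{ax} Γ(α, ax) = b x + c has exactly one solution x > 0, which satisfies 0 < x < (a^α Γ(−α) − c)/b. -/

import Mathlib

open MeasureTheory Set Real Filter Topology

/-- The upper incomplete Gamma function `Γ(α, w) = ∫_w^∞ t^{α−1} e^{−t} dt`. -/
noncomputable def upperGamma (α w : ℝ) : ℝ := ∫ t in Ioi w, t ^ (α - 1) * Real.exp (-t)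



-- integrability of t^(s-1) * exp(-(r*t)) on Ioi 0
lemma intOn_rpow_exp {s r : ℝ} (hs : 0 < s) (hr : 0 < r) :
    IntegrableOn (fun t : ℝ => t ^ (s - 1) * Real.exp (-(r * t))) (Ioi 0) := by
  have h := Real.GammaIntegral_convergent hs
  have h2 : IntegrableOn (fun t : ℝ => Real.exp (-(r * t)) * (r * t) ^ (s - 1)) (Ioi 0) := by
    have := (integrableOn_Ioi_comp_mul_left_iff
      (fun u : ℝ => Real.exp (-u) * u ^ (s - 1)) 0 hr).mpr
    simpa using this (by simpa using h)
  have h3 := h2.const_mul (r ^ (1 - s))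
  apply (integrableOn_congr_fun ?_ measurableSet_Ioi).mpr h3
  intro t ht
  simp only
  rw [mul_rpow hr.le (le_of_lt ht),
    show r ^ (1-s) * (Real.exp (-(r*t)) * (r ^ (s-1) * t ^ (s-1)))
    = (r ^ (1-s) * r ^ (s-1)) * (t ^ (s-1) * Real.exp (-(r*t))) by ring,
    ← Real.rpow_add hr]
  norm_num

lemma shift_scale (α a x : ℝ) (ha : 0 < a) (hx : 0 < x) :
    ∫ t in Ioi (0:ℝ), (a + t) ^ (α - 1) * Real.exp (-(x * t))
      = Real.exp (a * x) * x ^ (-α) * upperGamma α (a * x) := by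
  have step1 : ∫ t in Ioi (0:ℝ), (a + t) ^ (α - 1) * Real.exp (-(x * t))
      = ∫ s in Ioi a, s ^ (α - 1) * Real.exp (-(x * (s - a))) := by
    have h := (measurePreserving_add_right volume a).setIntegral_preimage_emb
      (measurableEmbedding_addRight a)
      (fun s : ℝ => s ^ (α - 1) * Real.exp (-(x * (s - a)))) (Ioi a)
    have hpre : (fun t : ℝ => t + a) ⁻¹' Ioi a = Ioi (0:ℝ) := by
      ext t; simp [mem_Ioi]
    rw [hpre] at h
    rw [← h]
    refine setIntegral_congr_fun measurableSet_Ioi (fun t _ => ?_)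
    simp only [add_tsub_cancel_right]
    ring_nf
  have step2 : ∫ s in Ioi a, s ^ (α - 1) * Real.exp (-(x * (s - a)))
      = Real.exp (a * x) * ∫ s in Ioi a, s ^ (α - 1) * Real.exp (-(x * s)) := by
    rw [← integral_const_mul]
    refine setIntegral_congr_fun measurableSet_Ioi (fun s _ => ?_)
    rw [show -(x * (s - a)) = a * x + -(x * s) by ring, Real.exp_add]
    ring
  have step3 : ∫ s in Ioi a, s ^ (α - 1) * Real.exp (-(x * s))
      = x ^ (-α) * upperGamma α (a * x) := by
    have h := integral_comp_mul_left_Ioi (fun u : ℝ => u ^ (α - 1) * Real.exp (-u)) a hx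
    have hcong : ∫ s in Ioi a, (x * s) ^ (α - 1) * Real.exp (-(x * s))
        = x ^ (α - 1) * ∫ s in Ioi a, s ^ (α - 1) * Real.exp (-(x * s)) := by
      rw [← integral_const_mul]
      refine setIntegral_congr_fun measurableSet_Ioi (fun s hs => ?_)
      rw [mul_rpow hx.le (le_of_lt (ha.trans hs))]
      ring
    rw [hcong] at h
    have hxne : x ^ (α - 1) ≠ 0 := (Real.rpow_pos_of_pos hx _).ne'
    have : ∫ s in Ioi a, s ^ (α - 1) * Real.exp (-(x * s))
        = (x ^ (α - 1))⁻¹ * (x⁻¹ • ∫ u in Ioi (x * a), u ^ (α - 1) * Real.exp (-u)) := by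
      rw [← h]; field_simp
    rw [this, smul_eq_mul, upperGamma, mul_comm a x]
    rw [← Real.rpow_neg_one x, ← Real.rpow_neg hx.le, ← mul_assoc, ← Real.rpow_add hx,
      show -(α-1) + -1 = -α by ring]
  rw [step1, step2, step3]; ring

lemma intOn_rpow_exp' : True := trivial

lemma integral_exp_neg_mul_Ioi' {r : ℝ} (hr : 0 < r) :
    ∫ t in Ioi (0:ℝ), Real.exp (-(r * t)) = 1 / r := by
  have h := integral_rpow_mul_exp_neg_mul_Ioi zero_lt_one hr
  have h2 : ((1:ℝ)/r) ^ (1:ℝ) * Real.Gamma 1 = 1/r := by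
    rw [Real.Gamma_one, Real.rpow_one, mul_one]
  rw [← h2, ← h]
  refine (setIntegral_congr_fun measurableSet_Ioi (fun t _ => ?_)).symm
  norm_num

lemma intOn_exp_neg_mul {r : ℝ} (hr : 0 < r) :
    IntegrableOn (fun t : ℝ => Real.exp (-(r * t))) (Ioi 0) := by
  apply (integrableOn_congr_fun (fun t _ => ?_) measurableSet_Ioi).mp
    (intOn_rpow_exp zero_lt_one hr)
  norm_num

lemma meas_G (α a : ℝ) : Measurable (fun ζ : ℝ => ζ ^ (-α) * Real.exp (-(a * ζ))) := by
  fun_prop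

lemma main_id (α a x : ℝ) (hα1 : α < 1) (ha : 0 < a) (hx : 0 < x) :
    ∫ ζ in Ioi (0:ℝ), ζ ^ (-α) * Real.exp (-(a * ζ)) / (ζ + x)
      = ∫ t in Ioi (0:ℝ), Real.Gamma (1 - α) * ((a + t) ^ (α - 1) * Real.exp (-(x * t))) := by
  have hα : 0 < 1 - α := by linarith
  set G : ℝ → ℝ := fun ζ => ζ ^ (-α) * Real.exp (-(a * ζ)) with hG
  -- integrability of LHS integrand
  have hGmeas : Measurable G := meas_G α a
  have hI1 : IntegrableOn (fun ζ => G ζ / (ζ + x)) (Ioi 0) := by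
    have base := intOn_rpow_exp hα ha
    rw [show (1-α)-1 = -α from by ring] at base
    refine Integrable.mono' (base.const_mul x⁻¹)
      ((hGmeas.div (measurable_id.add_const x)).aestronglyMeasurable)
      ?_
    filter_upwards [self_mem_ae_restrict measurableSet_Ioi] with ζ hζ
    have hζ0 : (0:ℝ) < ζ := hζ
    have hGnn : 0 ≤ G ζ := by
      have := Real.rpow_nonneg hζ0.le (-α); positivity
    rw [Real.norm_eq_abs, abs_of_nonneg (by positivity)]
    rw [div_le_iff₀ (by linarith), hG]
    calc ζ ^ (-α) * Real.exp (-(a * ζ)) = x⁻¹ * (ζ ^ (-α) * Real.exp (-(a * ζ))) * x := by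
          field_simp
      _ ≤ x⁻¹ * (ζ ^ (-α) * Real.exp (-(a * ζ))) * (ζ + x) := by
          have : (0:ℝ) ≤ x⁻¹ * (ζ ^ (-α) * Real.exp (-(a * ζ))) := by positivity
          nlinarith
  have hI4 : IntegrableOn (fun t : ℝ => (a + t) ^ (α - 1) * Real.exp (-(x * t))) (Ioi 0) := by
    refine Integrable.mono' ((intOn_exp_neg_mul hx).const_mul (a ^ (α - 1)))
      (Measurable.aestronglyMeasurable (by fun_prop)) ?_
    filter_upwards [self_mem_ae_restrict measurableSet_Ioi] with t ht
    have ht0 : (0:ℝ) < t := ht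
    rw [Real.norm_eq_abs, abs_of_nonneg (by positivity)]
    have : (a + t) ^ (α - 1) ≤ a ^ (α - 1) :=
      Real.rpow_le_rpow_of_nonpos ha (by linarith) (by linarith)
    have he : (0:ℝ) < Real.exp (-(x * t)) := Real.exp_pos _
    nlinarith
  -- nonnegativity
  have hnn1 : 0 ≤ᵐ[volume.restrict (Ioi (0:ℝ))] fun ζ => G ζ / (ζ + x) := by
    filter_upwards [self_mem_ae_restrict measurableSet_Ioi] with ζ hζ
    have hζ0 : (0:ℝ) < ζ := hζ
    have := Real.rpow_nonneg hζ0.le (-α)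
    have : 0 ≤ G ζ := by rw [hG]; positivity
    positivity
  have hnn4 : 0 ≤ᵐ[volume.restrict (Ioi (0:ℝ))]
      fun t : ℝ => (a + t) ^ (α - 1) * Real.exp (-(x * t)) := by
    filter_upwards [self_mem_ae_restrict measurableSet_Ioi] with t ht
    have ht0 : (0:ℝ) < t := ht
    positivity
  -- the ENNReal-valued kernel
  set F : ℝ → ℝ → ENNReal := fun ζ t => ENNReal.ofReal (G ζ * Real.exp (-((ζ + x) * t)))
    with hF
  have key : ENNReal.ofReal (∫ ζ in Ioi (0:ℝ), G ζ / (ζ + x))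
      = ENNReal.ofReal (∫ t in Ioi (0:ℝ),
          Real.Gamma (1 - α) * ((a + t) ^ (α - 1) * Real.exp (-(x * t)))) := by
    rw [ofReal_integral_eq_lintegral_ofReal hI1 hnn1]
    have step1 : ∫⁻ ζ in Ioi (0:ℝ), ENNReal.ofReal (G ζ / (ζ + x))
        = ∫⁻ ζ in Ioi (0:ℝ), ∫⁻ t in Ioi (0:ℝ), F ζ t := by
      refine setLIntegral_congr_fun measurableSet_Ioi (fun ζ hζ => ?_)
      have hζ0 : (0:ℝ) < ζ := hζ
      have hGnn : 0 ≤ G ζ := by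
        have := Real.rpow_nonneg hζ0.le (-α); rw [hG]; positivity
      have hiz : IntegrableOn (fun t : ℝ => G ζ * Real.exp (-((ζ + x) * t))) (Ioi 0) :=
        (intOn_exp_neg_mul (by linarith)).const_mul (G ζ)
      have hnz : 0 ≤ᵐ[volume.restrict (Ioi (0:ℝ))]
          fun t : ℝ => G ζ * Real.exp (-((ζ + x) * t)) :=
        ae_of_all _ (fun t => by positivity)
      rw [hF]
      rw [← ofReal_integral_eq_lintegral_ofReal hiz hnz]
      rw [integral_const_mul, integral_exp_neg_mul_Ioi' (by linarith : (0:ℝ) < ζ + x)]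
      rw [mul_one_div]
    rw [step1]
    have swap : ∫⁻ ζ in Ioi (0:ℝ), ∫⁻ t in Ioi (0:ℝ), F ζ t
        = ∫⁻ t in Ioi (0:ℝ), ∫⁻ ζ in Ioi (0:ℝ), F ζ t := by
      refine lintegral_lintegral_swap ?_
      apply Measurable.aemeasurable
      apply ENNReal.measurable_ofReal.comp
      fun_prop
    rw [swap]
    have step2 : ∫⁻ t in Ioi (0:ℝ), ∫⁻ ζ in Ioi (0:ℝ), F ζ t
        = ∫⁻ t in Ioi (0:ℝ), ENNReal.ofReal
            (Real.Gamma (1 - α) * ((a + t) ^ (α - 1) * Real.exp (-(x * t)))) := by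
      refine setLIntegral_congr_fun measurableSet_Ioi (fun t ht => ?_)
      have ht0 : (0:ℝ) < t := ht
      have hat : (0:ℝ) < a + t := by linarith
      have hiz : IntegrableOn
          (fun ζ : ℝ => ζ ^ ((1 - α) - 1) * Real.exp (-((a + t) * ζ)) * Real.exp (-(x * t)))
          (Ioi 0) := (intOn_rpow_exp hα hat).mul_const _
      have hnz : 0 ≤ᵐ[volume.restrict (Ioi (0:ℝ))]
          fun ζ : ℝ => ζ ^ ((1 - α) - 1) * Real.exp (-((a + t) * ζ)) * Real.exp (-(x * t)) := by
        filter_upwards [self_mem_ae_restrict measurableSet_Ioi] with ζ hζ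
        have hζ0 : (0:ℝ) < ζ := hζ
        positivity
      have hcong : ∫⁻ ζ in Ioi (0:ℝ), F ζ t
          = ∫⁻ ζ in Ioi (0:ℝ), ENNReal.ofReal
              (ζ ^ ((1 - α) - 1) * Real.exp (-((a + t) * ζ)) * Real.exp (-(x * t))) := by
        refine setLIntegral_congr_fun measurableSet_Ioi (fun ζ hζ => ?_)
        simp only [hF, hG]
        congr 1
        have hexp : Real.exp (-(a*ζ)) * Real.exp (-((ζ+x)*t))
            = Real.exp (-((a+t)*ζ)) * Real.exp (-(x*t)) := by
          rw [← Real.exp_add, ← Real.exp_add]; congr 1; ring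
        calc ζ ^ (-α) * Real.exp (-(a * ζ)) * Real.exp (-((ζ + x) * t))
            = ζ ^ (-α) * (Real.exp (-(a*ζ)) * Real.exp (-((ζ+x)*t))) := by ring
          _ = ζ ^ ((1-α)-1) * (Real.exp (-((a+t)*ζ)) * Real.exp (-(x*t))) := by
              rw [hexp, show (1-α)-1 = -α by ring]
          _ = ζ ^ ((1-α)-1) * Real.exp (-((a+t)*ζ)) * Real.exp (-(x*t)) := by ring
      rw [hcong, ← ofReal_integral_eq_lintegral_ofReal hiz hnz]
      congr 1
      rw [integral_mul_const, integral_rpow_mul_exp_neg_mul_Ioi hα hat]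
      rw [show (1:ℝ)/(a+t) = (a+t)⁻¹ by ring, Real.inv_rpow hat.le,
        ← Real.rpow_neg hat.le, show -(1-α) = α - 1 by ring]
      ring
    rw [step2, ← ofReal_integral_eq_lintegral_ofReal (hI4.const_mul _) ?_]
    · filter_upwards [hnn4] with t h4
      have : 0 ≤ Real.Gamma (1 - α) := Real.Gamma_nonneg_of_nonneg hα.le
      exact mul_nonneg this h4
  have g1 : 0 ≤ ∫ ζ in Ioi (0:ℝ), G ζ / (ζ + x) := setIntegral_nonneg measurableSet_Ioi
    (fun ζ hζ => by
      have hζ0 : (0:ℝ) < ζ := hζ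
      have : 0 ≤ G ζ := by
        have := Real.rpow_nonneg hζ0.le (-α); rw [hG]; positivity
      positivity)
  have g2 : 0 ≤ ∫ t in Ioi (0:ℝ),
      Real.Gamma (1 - α) * ((a + t) ^ (α - 1) * Real.exp (-(x * t))) :=
    setIntegral_nonneg measurableSet_Ioi (fun t ht => by
      have ht0 : (0:ℝ) < t := ht
      have : 0 ≤ Real.Gamma (1 - α) := Real.Gamma_nonneg_of_nonneg hα.le
      positivity)
  exact (ENNReal.ofReal_eq_ofReal_iff g1 g2).mp key


lemma setIntegral_pos_Ioi {f : ℝ → ℝ} (hf : IntegrableOn f (Ioi 0))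
    (hpos : ∀ ζ ∈ Ioi (0:ℝ), 0 < f ζ) : 0 < ∫ ζ in Ioi (0:ℝ), f ζ := by
  rw [setIntegral_pos_iff_support_of_nonneg_ae ?_ hf]
  · refine lt_of_lt_of_le ?_ (measure_mono
      (fun ζ (hζ : ζ ∈ Ioi (0:ℝ)) => (⟨(hpos ζ hζ).ne', hζ⟩ :
        ζ ∈ Function.support f ∩ Ioi 0)))
    simp [Real.volume_Ioi]
  · filter_upwards [self_mem_ae_restrict measurableSet_Ioi] with ζ hζ
    exact (hpos ζ hζ).le

section main
variable {α a x : ℝ}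

-- integrability of the main integrand, allowing x = 0 when α < 0
lemma intOn_main (hα1 : α < 1) (ha : 0 < a) (hx : 0 < x) :
    IntegrableOn (fun ζ : ℝ => ζ ^ (-α) * Real.exp (-(a * ζ)) / (ζ + x)) (Ioi 0) := by
  have hα : 0 < 1 - α := by linarith
  have base := intOn_rpow_exp hα ha
  rw [show (1-α)-1 = -α from by ring] at base
  refine Integrable.mono' (base.const_mul x⁻¹)
    (Measurable.aestronglyMeasurable (by fun_prop)) ?_
  filter_upwards [self_mem_ae_restrict measurableSet_Ioi] with ζ hζ
  have hζ0 : (0:ℝ) < ζ := hζ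
  have hGnn : 0 ≤ ζ ^ (-α) * Real.exp (-(a * ζ)) := by positivity
  rw [Real.norm_eq_abs, abs_of_nonneg (by positivity), div_le_iff₀ (by linarith)]
  calc ζ ^ (-α) * Real.exp (-(a * ζ)) = x⁻¹ * (ζ ^ (-α) * Real.exp (-(a * ζ))) * x := by
        field_simp
    _ ≤ x⁻¹ * (ζ ^ (-α) * Real.exp (-(a * ζ))) * (ζ + x) := by
        have : (0:ℝ) ≤ x⁻¹ * (ζ ^ (-α) * Real.exp (-(a * ζ))) := by positivity
        nlinarith

lemma intOn_zero (ha : 0 < a) (hα0 : α < 0) :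
    IntegrableOn (fun ζ : ℝ => ζ ^ (-α) * Real.exp (-(a * ζ)) / ζ) (Ioi 0) := by
  have base := intOn_rpow_exp (by linarith : (0:ℝ) < -α) ha
  refine (integrableOn_congr_fun (fun ζ hζ => ?_) measurableSet_Ioi).mpr base
  have hζ0 : (0:ℝ) < ζ := hζ
  rw [Real.rpow_sub hζ0, Real.rpow_one]
  ring

lemma integral_zero_eq (ha : 0 < a) (hα0 : α < 0) :
    ∫ ζ in Ioi (0:ℝ), ζ ^ (-α) * Real.exp (-(a * ζ)) / ζ = a ^ α * Real.Gamma (-α) := by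
  have h := integral_rpow_mul_exp_neg_mul_Ioi (by linarith : (0:ℝ) < -α) ha
  rw [show ((1:ℝ)/a) ^ (-α) = a ^ α by
    rw [one_div, Real.inv_rpow ha.le, ← Real.rpow_neg ha.le, neg_neg]] at h
  rw [← h]
  refine setIntegral_congr_fun measurableSet_Ioi (fun ζ hζ => ?_)
  have hζ0 : (0:ℝ) < ζ := hζ
  rw [Real.rpow_sub hζ0, Real.rpow_one]
  ring

-- F x < I, for α < 0, x > 0
lemma F_lt_I (ha : 0 < a) (hα0 : α < 0) (hx : 0 < x) :
    ∫ ζ in Ioi (0:ℝ), ζ ^ (-α) * Real.exp (-(a * ζ)) / (ζ + x)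
      < a ^ α * Real.Gamma (-α) := by
  have h1 := intOn_main (α := α) (by linarith) ha hx
  have h0 := intOn_zero (α := α) ha hα0
  rw [← integral_zero_eq ha hα0, ← sub_pos, ← integral_sub h0 h1]
  refine setIntegral_pos_Ioi (h0.sub h1) (fun ζ hζ => ?_)
  have hζ0 : (0:ℝ) < ζ := hζ
  have hGpos : 0 < ζ ^ (-α) * Real.exp (-(a * ζ)) := by positivity
  have : ζ ^ (-α) * Real.exp (-(a * ζ)) / (ζ + x)
      < ζ ^ (-α) * Real.exp (-(a * ζ)) / ζ := by
    apply div_lt_div_of_pos_left hGpos hζ0 (by linarith)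
  simpa [sub_pos] using this

-- strict antitonicity
lemma F_strictAnti (hα1 : α < 1) (ha : 0 < a) : StrictAntiOn
    (fun x : ℝ => ∫ ζ in Ioi (0:ℝ), ζ ^ (-α) * Real.exp (-(a * ζ)) / (ζ + x)) (Ioi 0) := by
  intro x hx y hy hxy
  have hx0 : (0:ℝ) < x := hx
  have hy0 : (0:ℝ) < y := hy
  have h1 := intOn_main (α := α) hα1 ha hx
  have h2 := intOn_main (α := α) hα1 ha hy
  simp only
  rw [← sub_pos, ← integral_sub h1 h2]
  refine setIntegral_pos_Ioi (h1.sub h2) (fun ζ hζ => ?_)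
  have hζ0 : (0:ℝ) < ζ := hζ
  have hGpos : 0 < ζ ^ (-α) * Real.exp (-(a * ζ)) := by positivity
  have : ζ ^ (-α) * Real.exp (-(a * ζ)) / (ζ + y)
      < ζ ^ (-α) * Real.exp (-(a * ζ)) / (ζ + x) := by
    apply div_lt_div_of_pos_left hGpos (by linarith) (by linarith)
  simpa [sub_pos] using this

-- continuity
lemma F_contAt (hα1 : α < 1) (ha : 0 < a) (hx : 0 < x) : ContinuousAt
    (fun x : ℝ => ∫ ζ in Ioi (0:ℝ), ζ ^ (-α) * Real.exp (-(a * ζ)) / (ζ + x)) x := by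
  refine continuousAt_of_dominated (bound := fun ζ => ζ ^ (-α) * Real.exp (-(a * ζ)) / (ζ + x/2))
    ?_ ?_ (intOn_main hα1 ha (by linarith)) ?_
  · filter_upwards with y
    exact Measurable.aestronglyMeasurable (by fun_prop)
  · filter_upwards [eventually_gt_nhds (show x/2 < x by linarith)] with y hy
    filter_upwards [self_mem_ae_restrict measurableSet_Ioi] with ζ hζ
    have hζ0 : (0:ℝ) < ζ := hζ
    have hy2 : (0:ℝ) < ζ + y := by linarith
    have hx2 : (0:ℝ) < ζ + x/2 := by linarith
    have hGnn : 0 ≤ ζ ^ (-α) * Real.exp (-(a * ζ)) := by positivity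
    rw [Real.norm_eq_abs, abs_of_nonneg (by positivity)]
    gcongr
  · filter_upwards [self_mem_ae_restrict measurableSet_Ioi] with ζ hζ
    have hζ0 : (0:ℝ) < ζ := hζ
    exact (continuousAt_const.div (continuousAt_const.add continuousAt_id) (by positivity))

-- limit at 0+
lemma F_tendsto_zero (ha : 0 < a) (hα0 : α < 0) : Tendsto
    (fun x : ℝ => ∫ ζ in Ioi (0:ℝ), ζ ^ (-α) * Real.exp (-(a * ζ)) / (ζ + x))
    (nhdsWithin 0 (Ioi 0)) (nhds (a ^ α * Real.Gamma (-α))) := by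
  rw [← integral_zero_eq ha hα0]
  refine tendsto_integral_filter_of_dominated_convergence
    (fun ζ => ζ ^ (-α) * Real.exp (-(a * ζ)) / ζ) ?_ ?_ (intOn_zero ha hα0) ?_
  · filter_upwards with y
    exact Measurable.aestronglyMeasurable (by fun_prop)
  · filter_upwards [self_mem_nhdsWithin] with y hy
    filter_upwards [self_mem_ae_restrict measurableSet_Ioi] with ζ hζ
    have hζ0 : (0:ℝ) < ζ := hζ
    have hy0 : (0:ℝ) < y := hy
    have hGnn : 0 ≤ ζ ^ (-α) * Real.exp (-(a * ζ)) := by positivity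
    rw [Real.norm_eq_abs, abs_of_nonneg (by positivity)]
    gcongr
    · linarith
  · filter_upwards [self_mem_ae_restrict measurableSet_Ioi] with ζ hζ
    have hζ0 : (0:ℝ) < ζ := hζ
    have : ContinuousAt (fun y : ℝ => ζ ^ (-α) * Real.exp (-(a * ζ)) / (ζ + y)) 0 :=
      continuousAt_const.div (continuousAt_const.add continuousAt_id) (by simpa using hζ0.ne')
    have := this.continuousWithinAt (s := Ioi 0)
    simpa using this.tendsto

-- upper bound F x ≤ K / x
lemma F_le (hα1 : α < 1) (ha : 0 < a) (hx : 0 < x) :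
    ∫ ζ in Ioi (0:ℝ), ζ ^ (-α) * Real.exp (-(a * ζ)) / (ζ + x)
      ≤ (∫ ζ in Ioi (0:ℝ), ζ ^ (-α) * Real.exp (-(a * ζ))) / x := by
  have hα : 0 < 1 - α := by linarith
  have base := intOn_rpow_exp hα ha
  rw [show (1-α)-1 = -α from by ring] at base
  rw [div_eq_inv_mul, ← integral_const_mul]
  refine setIntegral_mono_on (intOn_main hα1 ha hx) (base.const_mul x⁻¹)
    measurableSet_Ioi (fun ζ hζ => ?_)
  have hζ0 : (0:ℝ) < ζ := hζ
  have hGnn : 0 ≤ ζ ^ (-α) * Real.exp (-(a * ζ)) := by positivity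
  rw [div_le_iff₀ (by linarith)]
  calc ζ ^ (-α) * Real.exp (-(a * ζ)) = x⁻¹ * (ζ ^ (-α) * Real.exp (-(a * ζ))) * x := by
        field_simp
    _ ≤ x⁻¹ * (ζ ^ (-α) * Real.exp (-(a * ζ))) * (ζ + x) := by
        have : (0:ℝ) ≤ x⁻¹ * (ζ ^ (-α) * Real.exp (-(a * ζ))) := by positivity
        nlinarith

lemma F_pos (hα1 : α < 1) (ha : 0 < a) (hx : 0 < x) :
    0 < ∫ ζ in Ioi (0:ℝ), ζ ^ (-α) * Real.exp (-(a * ζ)) / (ζ + x) := by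
  refine setIntegral_pos_Ioi (intOn_main hα1 ha hx) (fun ζ hζ => ?_)
  have hζ0 : (0:ℝ) < ζ := hζ
  positivity

end main

/-- For `α < 1`, `α ≠ 0`, `a > 0` and `x > 0`:
`Γ(1−α) x^{−α} e^{ax} Γ(α, ax) = ∫₀^∞ ζ^{−α} e^{−aζ}/(ζ+x) dζ > 0`.
If moreover `α < 0`, `b > 0`, `c < a^α Γ(−α)`, then
`Γ(1−α) x^{−α} e^{ax} Γ(α, ax) = b x + c` has exactly one positive solution,
bounded by `(a^α Γ(−α) − c)/b`. -/
theorem stmt_19 (α a : ℝ) (hα1 : α < 1) (hα0 : α ≠ 0) (ha : 0 < a) :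
    (∀ x : ℝ, 0 < x →
      Real.Gamma (1 - α) * x ^ (-α) * Real.exp (a * x) * upperGamma α (a * x)
        = (∫ ζ in Ioi (0 : ℝ), ζ ^ (-α) * Real.exp (-(a * ζ)) / (ζ + x)) ∧
      0 < Real.Gamma (1 - α) * x ^ (-α) * Real.exp (a * x) * upperGamma α (a * x)) ∧
    (∀ b c : ℝ, α < 0 → 0 < b → c < a ^ α * Real.Gamma (-α) →
      (∃! x : ℝ, 0 < x ∧
        Real.Gamma (1 - α) * x ^ (-α) * Real.exp (a * x) * upperGamma α (a * x)
          = b * x + c) ∧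
      (∀ x : ℝ, 0 < x →
        Real.Gamma (1 - α) * x ^ (-α) * Real.exp (a * x) * upperGamma α (a * x)
          = b * x + c →
        x < (a ^ α * Real.Gamma (-α) - c) / b)) := by
  have hkey : ∀ x : ℝ, 0 < x →
      Real.Gamma (1 - α) * x ^ (-α) * Real.exp (a * x) * upperGamma α (a * x)
        = ∫ ζ in Ioi (0 : ℝ), ζ ^ (-α) * Real.exp (-(a * ζ)) / (ζ + x) := by
    intro x hx
    rw [main_id α a x hα1 ha hx, integral_const_mul, shift_scale α a x ha hx]
    ring
  constructor
  · intro x hx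
    refine ⟨hkey x hx, ?_⟩
    rw [hkey x hx]
    exact F_pos hα1 ha hx
  · intro b c hα0' hb hc
    set I := a ^ α * Real.Gamma (-α) with hI
    -- existence of a point with F x₁ > b x₁ + c
    have htendlin : Tendsto (fun x : ℝ => b * x + c) (nhdsWithin 0 (Ioi 0)) (nhds c) := by
      have : Tendsto (fun x : ℝ => b * x + c) (nhds 0) (nhds (b * 0 + c)) := by
        exact ((continuous_const.mul continuous_id).add continuous_const).tendsto 0
      simpa using this.mono_left nhdsWithin_le_nhds
    have htend : Tendsto
        (fun x : ℝ => (∫ ζ in Ioi (0:ℝ), ζ ^ (-α) * Real.exp (-(a * ζ)) / (ζ + x))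
          - (b * x + c)) (nhdsWithin 0 (Ioi 0)) (nhds (I - c)) :=
      (F_tendsto_zero ha hα0').sub htendlin
    have hev : ∀ᶠ x in nhdsWithin (0:ℝ) (Ioi 0),
        0 < (∫ ζ in Ioi (0:ℝ), ζ ^ (-α) * Real.exp (-(a * ζ)) / (ζ + x)) - (b * x + c) :=
      htend.eventually (eventually_gt_nhds (by linarith))
    obtain ⟨x₁, hx₁0, hx₁⟩ : ∃ x₁ : ℝ, 0 < x₁ ∧
        0 < (∫ ζ in Ioi (0:ℝ), ζ ^ (-α) * Real.exp (-(a * ζ)) / (ζ + x₁)) - (b * x₁ + c) := by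
      obtain ⟨x₁, h1, h2⟩ := (hev.and self_mem_nhdsWithin).exists
      exact ⟨x₁, h2, h1⟩
    -- a point with F x₂ < b x₂ + c
    set K := ∫ ζ in Ioi (0:ℝ), ζ ^ (-α) * Real.exp (-(a * ζ)) with hK
    have hK0 : 0 ≤ K := setIntegral_nonneg measurableSet_Ioi (fun ζ hζ => by
      have hζ0 : (0:ℝ) < ζ := hζ; positivity)
    set x₂ := max (x₁ + 1) (max 1 ((K + 1 - c) / b)) with hx₂def
    have hx₂1 : (1:ℝ) ≤ x₂ := le_trans (le_max_left _ _) (le_max_right _ _)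
    have hx₂0 : (0:ℝ) < x₂ := by linarith
    have hx₁2 : x₁ < x₂ := by
      have := le_max_left (x₁ + 1) (max 1 ((K + 1 - c) / b)); linarith
    have hx₂b : K + 1 ≤ b * x₂ + c := by
      have h1 : (K + 1 - c) / b ≤ x₂ := le_trans (le_max_right _ _) (le_max_right _ _)
      have := (div_le_iff₀ hb).mp h1
      linarith
    have hFx₂ : (∫ ζ in Ioi (0:ℝ), ζ ^ (-α) * Real.exp (-(a * ζ)) / (ζ + x₂))
        - (b * x₂ + c) < 0 := by
      have h1 := F_le hα1 ha hx₂0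
      have h2 : K / x₂ ≤ K := div_le_self hK0 hx₂1
      rw [← hK] at h1
      linarith
    -- IVT
    set g : ℝ → ℝ := fun x =>
      (∫ ζ in Ioi (0:ℝ), ζ ^ (-α) * Real.exp (-(a * ζ)) / (ζ + x)) - (b * x + c) with hg
    have hgc : ContinuousOn g (Icc x₁ x₂) := by
      intro y hy
      have hy0 : 0 < y := lt_of_lt_of_le hx₁0 hy.1
      exact ((F_contAt hα1 ha hy0).sub
        (((continuous_const.mul continuous_id).add continuous_const).continuousAt)
        ).continuousWithinAt
    have hsub : Icc (g x₂) (g x₁) ⊆ g '' Icc x₁ x₂ := intermediate_value_Icc' hx₁2.le hgc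
    obtain ⟨x₀, hx₀mem, hx₀⟩ := hsub ⟨hFx₂.le, hx₁.le⟩
    have hx₀0 : 0 < x₀ := lt_of_lt_of_le hx₁0 hx₀mem.1
    have hx₀eq : (∫ ζ in Ioi (0:ℝ), ζ ^ (-α) * Real.exp (-(a * ζ)) / (ζ + x₀)) = b * x₀ + c := by
      have := hx₀; rw [hg] at this; simp only at this; linarith [this]
    -- assemble
    refine ⟨⟨x₀, ⟨hx₀0, by rw [hkey x₀ hx₀0]; exact hx₀eq⟩, ?_⟩, ?_⟩
    · rintro y ⟨hy0, hyeq⟩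
      rw [hkey y hy0] at hyeq
      by_contra hne
      rcases lt_or_gt_of_ne hne with h | h
      · have := F_strictAnti hα1 ha (mem_Ioi.mpr hy0) (mem_Ioi.mpr hx₀0) h
        simp only at this
        rw [hyeq, hx₀eq] at this
        nlinarith
      · have := F_strictAnti hα1 ha (mem_Ioi.mpr hx₀0) (mem_Ioi.mpr hy0) h
        simp only at this
        rw [hyeq, hx₀eq] at this
        nlinarith
    · intro x hx hxeq
      rw [hkey x hx] at hxeq
      have := F_lt_I ha hα0' hx
      rw [hxeq] at this
      rw [lt_div_iff₀ hb]
      linarith
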